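/- Let C(u_1,u_2) = ∑_{h_1=0}^{l_1} ∑_{h_2=0}^{l_2} η_{h_1,h_2} P_{l_1,h_1}(u_1) P_{l_2,h_2}(u_2) with marginals F_1(u_1) = C(u_1,1) = ∑_{h_1} η_{h_1,l_2} P_{l_1,h_1}(u_1) and F_2(u_2) = C(1,u_2) = ∑_{h_2} η_{l_1,h_2} P_{l_2,h_2}(u_2). Then the Spearman functional 12 ∫_0^1 ∫_0^1 (C(u_1,u_2) − F_1(u_1)F_2(u_2)) dF_1(u_1) dF_2(u_2) equals 12 ∑_{h_1=0}^{l_1} ∑_{h_2=0}^{l_2} ∑_{g_1=0}^{l_1−1} ∑_{g_2=0}^{l_2−1} (η_{h_1,h_2} − η_{h_1,l_2} η_{l_1,h_2})(η_{g_1+1,l_2} − η_{g_1,l_2})(η_{l_1,g_2+1} − η_{l_1,g_2}) ∏_{s=1}^2 l_s C(l_s,h_s) C(l_s−1,g_s) B(h_s+g_s+1, 2l_s−h_s−g_s). -/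

import Mathlib

/-- Bernstein basis polynomial `P_{l,h}(u) = C(l,h) u^h (1-u)^{l-h}`. -/
noncomputable def bern (l h : ℕ) (u : ℝ) : ℝ := (l.choose h : ℝ) * u ^ h * (1 - u) ^ (l - h)

/-- The Beta function `B(a,b) = ∫_0^1 t^(a-1) (1-t)^(b-1) dt`. -/
noncomputable def betaFn (a b : ℝ) : ℝ := ∫ t in (0:ℝ)..1, t ^ (a - 1) * (1 - t) ^ (b - 1)

/-- A bivariate polynomial in Bernstein form. -/
noncomputable def bernForm (l₁ l₂ : ℕ) (η : ℕ → ℕ → ℝ) (u₁ u₂ : ℝ) : ℝ :=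
  ∑ h₁ ∈ Finset.range (l₁ + 1), ∑ h₂ ∈ Finset.range (l₂ + 1),
    η h₁ h₂ * bern l₁ h₁ u₁ * bern l₂ h₂ u₂

lemma bern_cont (l h : ℕ) : Continuous (bern l h) := by unfold bern; fun_prop

lemma bern_one (l h : ℕ) : bern l h 1 = if h = l then 1 else 0 := by
  by_cases hle : h = l
  · subst hle; simp [bern]
  · rcases Nat.lt_or_ge h l with hlt | hge
    · simp [bern, sub_self, zero_pow (by omega : l - h ≠ 0), hle]
    · have hlt : l < h := lt_of_le_of_ne hge (Ne.symm hle)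
      simp [bern, Nat.choose_eq_zero_of_lt hlt, hle]

lemma hasDerivAt_bern (l h : ℕ) (u : ℝ) :
    HasDerivAt (bern l h)
      ((l.choose h : ℝ) * ((h:ℝ) * u ^ (h-1) * (1-u) ^ (l-h))
        - (l.choose h : ℝ) * (((l-h:ℕ):ℝ) * u ^ h * (1-u) ^ (l-h-1))) u := by
  have h1 := hasDerivAt_pow h u
  have h2 : HasDerivAt (fun x : ℝ => (1-x) ^ (l-h)) (((l-h:ℕ):ℝ) * (1-u) ^ (l-h-1) * (-1)) u := by
    simpa using ((hasDerivAt_id u).const_sub 1).fun_pow (l-h)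
  have key := (h1.fun_mul h2).const_mul ((l.choose h : ℝ))
  have hfun : bern l h = fun x => (l.choose h : ℝ) * (x ^ h * (1-x) ^ (l-h)) := by
    funext x; simp [bern, mul_assoc]
  rw [hfun]
  exact key.congr_deriv (by ring)

lemma deriv_bern_sum (l : ℕ) (hl : 1 ≤ l) (a : ℕ → ℝ) (u : ℝ) :
    deriv (fun x => ∑ h ∈ Finset.range (l+1), a h * bern l h x) u
      = (l:ℝ) * ∑ g ∈ Finset.range l, (a (g+1) - a g) * bern (l-1) g u := by
  have hD : HasDerivAt (fun x => ∑ h ∈ Finset.range (l+1), a h * bern l h x)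
      (∑ h ∈ Finset.range (l+1), a h *
        ((l.choose h : ℝ) * ((h:ℝ) * u ^ (h-1) * (1-u) ^ (l-h))
          - (l.choose h : ℝ) * (((l-h:ℕ):ℝ) * u ^ h * (1-u) ^ (l-h-1)))) u :=
    HasDerivAt.fun_sum (fun h _ => (hasDerivAt_bern l h u).const_mul (a h))
  rw [hD.deriv]
  simp only [mul_sub, Finset.sum_sub_distrib]
  rw [Finset.sum_range_succ'
    (fun h => a h * ((l.choose h : ℝ) * ((h:ℝ) * u ^ (h-1) * (1-u) ^ (l-h))))]
  rw [Finset.sum_range_succ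
    (fun h => a h * ((l.choose h : ℝ) * (((l-h:ℕ):ℝ) * u ^ h * (1-u) ^ (l-h-1))))]
  simp only [Nat.cast_zero, Nat.sub_self, zero_mul, mul_zero, add_zero]
  rw [Finset.mul_sum, ← Finset.sum_sub_distrib]
  refine Finset.sum_congr rfl fun g hg => ?_
  have hg' : g < l := Finset.mem_range.mp hg
  have e1 : l - (g+1) = (l-1) - g := by omega
  have e2 : l - g - 1 = (l-1) - g := by omega
  have n1 : l.choose (g+1) * (g+1) = l * (l-1).choose g := by
    have := Nat.add_one_mul_choose_eq (l-1) g
    simp only [Nat.succ_eq_add_one, Nat.sub_add_cancel hl] at this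
    omega
  have n2 : l.choose g * (l - g) = l * (l-1).choose g := by
    rw [← Nat.choose_succ_right_eq]
    omega
  have c1 : ((g:ℝ)+1) * (l.choose (g+1) : ℝ) = (l:ℝ) * ((l-1).choose g : ℝ) := by
    have := congrArg (Nat.cast (R := ℝ)) n1; push_cast at this; linarith
  have c2 : (((l-g:ℕ)):ℝ) * (l.choose g : ℝ) = (l:ℝ) * ((l-1).choose g : ℝ) := by
    have := congrArg (Nat.cast (R := ℝ)) n2; push_cast at this; linarith
  rw [e1, e2]
  unfold bern
  push_cast
  linear_combination (u^g*(1-u)^(l-1-g)*a (g+1)) * c1 - (u^g*(1-u)^(l-1-g)*a g) * c2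

lemma betaFn_nat (m n : ℕ) :
    betaFn ((m:ℝ)+1) ((n:ℝ)+1) = ∫ t in (0:ℝ)..1, t ^ m * (1-t) ^ n := by
  unfold betaFn
  simp only [add_sub_cancel_right, Real.rpow_natCast]

lemma bern_integral (l h g : ℕ) (hl : 1 ≤ l) (hh : h ≤ l) (hg : g < l) :
    (∫ u in (0:ℝ)..1, bern l h u * ((l:ℝ) * bern (l-1) g u))
      = (l:ℝ) * (l.choose h : ℝ) * ((l-1).choose g : ℝ) *
          betaFn ((h:ℝ) + g + 1) (2 * l - h - g) := by
  have e : (l-h) + ((l-1)-g) = 2*l-1-h-g := by omega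
  have c2 : (2*(l:ℝ) - h - g : ℝ) = ((2*l-1-h-g : ℕ):ℝ) + 1 := by
    have : (2*l-1-h-g : ℕ) = 2*l - (1+h+g) := by omega
    rw [this, Nat.cast_sub (by omega)]
    push_cast; ring
  have c1 : ((h:ℝ) + g + 1 : ℝ) = ((h+g : ℕ):ℝ) + 1 := by push_cast; ring
  rw [c1, c2, betaFn_nat]
  rw [show (∫ u in (0:ℝ)..1, bern l h u * ((l:ℝ) * bern (l-1) g u))
      = ∫ u in (0:ℝ)..1, ((l:ℝ) * (l.choose h : ℝ) * ((l-1).choose g : ℝ)) *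
          (u ^ (h+g) * (1-u) ^ (2*l-1-h-g)) from ?_]
  · rw [intervalIntegral.integral_const_mul]
  · apply intervalIntegral.integral_congr
    intro u _
    unfold bern
    simp only [← e, pow_add]
    ring

lemma margin₁ (l₁ l₂ : ℕ) (η : ℕ → ℕ → ℝ) (u : ℝ) :
    bernForm l₁ l₂ η u 1 = ∑ h₁ ∈ Finset.range (l₁+1), η h₁ l₂ * bern l₁ h₁ u := by
  unfold bernForm
  refine Finset.sum_congr rfl fun h₁ _ => ?_
  rw [Finset.sum_eq_single l₂]
  · rw [bern_one]; simp
  · intro b _ hb; rw [bern_one, if_neg hb, mul_zero]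
  · intro hmem; exact absurd (Finset.self_mem_range_succ l₂) hmem

lemma margin₂ (l₁ l₂ : ℕ) (η : ℕ → ℕ → ℝ) (u : ℝ) :
    bernForm l₁ l₂ η 1 u = ∑ h₂ ∈ Finset.range (l₂+1), η l₁ h₂ * bern l₂ h₂ u := by
  unfold bernForm
  rw [Finset.sum_eq_single l₁]
  · refine Finset.sum_congr rfl fun h₂ _ => ?_
    rw [bern_one]; simp
  · intro b _ hb
    refine Finset.sum_eq_zero fun h₂ _ => ?_
    rw [bern_one, if_neg hb]; ring
  · intro hmem; exact absurd (Finset.self_mem_range_succ l₁) hmem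

lemma expand4 (R₁ R₂ S₁ S₂ : Finset ℕ) (A : ℕ → ℕ → ℝ) (B C : ℕ → ℝ) :
    (∑ h₁ ∈ R₁, ∑ h₂ ∈ R₂, A h₁ h₂) * (∑ g₁ ∈ S₁, B g₁) * (∑ g₂ ∈ S₂, C g₂)
      = ∑ h₁ ∈ R₁, ∑ h₂ ∈ R₂, ∑ g₁ ∈ S₁, ∑ g₂ ∈ S₂, A h₁ h₂ * B g₁ * C g₂ := by
  rw [Finset.sum_mul, Finset.sum_mul]
  refine Finset.sum_congr rfl fun h₁ _ => ?_
  rw [Finset.sum_mul, Finset.sum_mul]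
  refine Finset.sum_congr rfl fun h₂ _ => ?_
  simp only [Finset.mul_sum, Finset.sum_mul]
  rw [Finset.sum_comm]

lemma integral_quad (s₁ s₂ t₁ t₂ : Finset ℕ) (f : ℕ → ℕ → ℕ → ℕ → ℝ → ℝ)
    (hf : ∀ a b c d, Continuous (f a b c d)) :
    (∫ u in (0:ℝ)..1, ∑ a ∈ s₁, ∑ b ∈ s₂, ∑ c ∈ t₁, ∑ d ∈ t₂, f a b c d u)
      = ∑ a ∈ s₁, ∑ b ∈ s₂, ∑ c ∈ t₁, ∑ d ∈ t₂, ∫ u in (0:ℝ)..1, f a b c d u := by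
  rw [intervalIntegral.integral_finset_sum (fun a _ =>
    (Continuous.intervalIntegrable (continuous_finset_sum _ fun b _ =>
      continuous_finset_sum _ fun c _ => continuous_finset_sum _ fun d _ => hf a b c d) _ _))]
  refine Finset.sum_congr rfl fun a _ => ?_
  rw [intervalIntegral.integral_finset_sum (fun b _ =>
    (Continuous.intervalIntegrable (continuous_finset_sum _ fun c _ =>
      continuous_finset_sum _ fun d _ => hf a b c d) _ _))]
  refine Finset.sum_congr rfl fun b _ => ?_
  rw [intervalIntegral.integral_finset_sum (fun c _ =>
    (Continuous.intervalIntegrable (continuous_finset_sum _ fun d _ => hf a b c d) _ _))]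
  refine Finset.sum_congr rfl fun c _ => ?_
  exact intervalIntegral.integral_finset_sum (fun d _ => (hf a b c d).intervalIntegrable _ _)

/-- Closed-form expression for the Spearman functional
`12 ∫∫ (C(u₁,u₂) − F₁(u₁)F₂(u₂)) dF₁(u₁) dF₂(u₂)` of a bivariate Bernstein-form
polynomial, where `F₁(u₁) = C(u₁,1)` and `F₂(u₂) = C(1,u₂)` and `dFₛ` means
integration against the derivative of `Fₛ`. -/
theorem spearman_functional_closed_form (l₁ l₂ : ℕ) (hl₁ : 1 ≤ l₁) (hl₂ : 1 ≤ l₂)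
    (η : ℕ → ℕ → ℝ) :
    12 * (∫ u₂ in (0:ℝ)..1, ∫ u₁ in (0:ℝ)..1,
        (bernForm l₁ l₂ η u₁ u₂ - bernForm l₁ l₂ η u₁ 1 * bernForm l₁ l₂ η 1 u₂) *
          deriv (fun a => bernForm l₁ l₂ η a 1) u₁ *
          deriv (fun b => bernForm l₁ l₂ η 1 b) u₂) =
      12 * ∑ h₁ ∈ Finset.range (l₁ + 1), ∑ h₂ ∈ Finset.range (l₂ + 1),
        ∑ g₁ ∈ Finset.range l₁, ∑ g₂ ∈ Finset.range l₂,
          (η h₁ h₂ - η h₁ l₂ * η l₁ h₂) *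
            (η (g₁ + 1) l₂ - η g₁ l₂) * (η l₁ (g₂ + 1) - η l₁ g₂) *
            ((l₁ : ℝ) * (l₁.choose h₁ : ℝ) * ((l₁ - 1).choose g₁ : ℝ) *
              betaFn (h₁ + g₁ + 1) (2 * l₁ - h₁ - g₁)) *
            ((l₂ : ℝ) * (l₂.choose h₂ : ℝ) * ((l₂ - 1).choose g₂ : ℝ) *
              betaFn (h₂ + g₂ + 1) (2 * l₂ - h₂ - g₂)) := by
  have hd₁ : ∀ u : ℝ, deriv (fun a => bernForm l₁ l₂ η a 1) u
      = (l₁:ℝ) * ∑ g ∈ Finset.range l₁, (η (g+1) l₂ - η g l₂) * bern (l₁-1) g u := by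
    intro u
    have hfun : (fun a => bernForm l₁ l₂ η a 1)
        = fun a => ∑ h ∈ Finset.range (l₁+1), η h l₂ * bern l₁ h a :=
      funext fun a => margin₁ l₁ l₂ η a
    rw [hfun, deriv_bern_sum l₁ hl₁]
  have hd₂ : ∀ u : ℝ, deriv (fun b => bernForm l₁ l₂ η 1 b) u
      = (l₂:ℝ) * ∑ g ∈ Finset.range l₂, (η l₁ (g+1) - η l₁ g) * bern (l₂-1) g u := by
    intro u
    have hfun : (fun b => bernForm l₁ l₂ η 1 b)
        = fun b => ∑ h ∈ Finset.range (l₂+1), η l₁ h * bern l₂ h b :=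
      funext fun b => margin₂ l₁ l₂ η b
    rw [hfun, deriv_bern_sum l₂ hl₂]
  set T : ℕ → ℕ → ℕ → ℕ → ℝ := fun h₁ h₂ g₁ g₂ =>
    (η h₁ h₂ - η h₁ l₂ * η l₁ h₂) * (η (g₁+1) l₂ - η g₁ l₂) * (η l₁ (g₂+1) - η l₁ g₂) with hT
  have hpt : ∀ u₁ u₂ : ℝ,
      (bernForm l₁ l₂ η u₁ u₂ - bernForm l₁ l₂ η u₁ 1 * bernForm l₁ l₂ η 1 u₂) *
        deriv (fun a => bernForm l₁ l₂ η a 1) u₁ *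
        deriv (fun b => bernForm l₁ l₂ η 1 b) u₂
      = ∑ h₁ ∈ Finset.range (l₁+1), ∑ h₂ ∈ Finset.range (l₂+1),
          ∑ g₁ ∈ Finset.range l₁, ∑ g₂ ∈ Finset.range l₂,
          T h₁ h₂ g₁ g₂ * (bern l₁ h₁ u₁ * ((l₁:ℝ) * bern (l₁-1) g₁ u₁)) *
            (bern l₂ h₂ u₂ * ((l₂:ℝ) * bern (l₂-1) g₂ u₂)) := by
    intro u₁ u₂
    rw [margin₁ l₁ l₂ η u₁, margin₂ l₁ l₂ η u₂, hd₁, hd₂]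
    have hC : bernForm l₁ l₂ η u₁ u₂
        - (∑ h₁ ∈ Finset.range (l₁+1), η h₁ l₂ * bern l₁ h₁ u₁) *
          (∑ h₂ ∈ Finset.range (l₂+1), η l₁ h₂ * bern l₂ h₂ u₂)
        = ∑ h₁ ∈ Finset.range (l₁+1), ∑ h₂ ∈ Finset.range (l₂+1),
            (η h₁ h₂ - η h₁ l₂ * η l₁ h₂) * (bern l₁ h₁ u₁ * bern l₂ h₂ u₂) := by
      unfold bernForm
      rw [Finset.sum_mul_sum, ← Finset.sum_sub_distrib]
      refine Finset.sum_congr rfl fun h₁ _ => ?_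
      rw [← Finset.sum_sub_distrib]
      exact Finset.sum_congr rfl fun h₂ _ => by ring
    have e₁ : ((l₁:ℝ) * ∑ g ∈ Finset.range l₁, (η (g+1) l₂ - η g l₂) * bern (l₁-1) g u₁)
        = ∑ g ∈ Finset.range l₁, (η (g+1) l₂ - η g l₂) * ((l₁:ℝ) * bern (l₁-1) g u₁) := by
      rw [Finset.mul_sum]; exact Finset.sum_congr rfl fun _ _ => by ring
    have e₂ : ((l₂:ℝ) * ∑ g ∈ Finset.range l₂, (η l₁ (g+1) - η l₁ g) * bern (l₂-1) g u₂)
        = ∑ g ∈ Finset.range l₂, (η l₁ (g+1) - η l₁ g) * ((l₂:ℝ) * bern (l₂-1) g u₂) := by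
      rw [Finset.mul_sum]; exact Finset.sum_congr rfl fun _ _ => by ring
    rw [hC, e₁, e₂, expand4]
    refine Finset.sum_congr rfl fun h₁ _ => Finset.sum_congr rfl fun h₂ _ =>
      Finset.sum_congr rfl fun g₁ _ => Finset.sum_congr rfl fun g₂ _ => ?_
    rw [hT]; ring
  have hcont : ∀ (K : ℝ) (l h l' g : ℕ) (M K' : ℝ),
      Continuous (fun u : ℝ => K * (bern l h u * (M * bern l' g u)) * K') := by
    intro K l h l' g M K'
    exact (continuous_const.mul ((bern_cont l h).mul
      (continuous_const.mul (bern_cont l' g)))).mul continuous_const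
  have step1 : (∫ u₂ in (0:ℝ)..1, ∫ u₁ in (0:ℝ)..1,
        (bernForm l₁ l₂ η u₁ u₂ - bernForm l₁ l₂ η u₁ 1 * bernForm l₁ l₂ η 1 u₂) *
          deriv (fun a => bernForm l₁ l₂ η a 1) u₁ *
          deriv (fun b => bernForm l₁ l₂ η 1 b) u₂)
      = ∫ u₂ in (0:ℝ)..1, ∑ h₁ ∈ Finset.range (l₁+1), ∑ h₂ ∈ Finset.range (l₂+1),
          ∑ g₁ ∈ Finset.range l₁, ∑ g₂ ∈ Finset.range l₂,
          (T h₁ h₂ g₁ g₂ * (∫ u in (0:ℝ)..1, bern l₁ h₁ u * ((l₁:ℝ) * bern (l₁-1) g₁ u))) *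
            (bern l₂ h₂ u₂ * ((l₂:ℝ) * bern (l₂-1) g₂ u₂)) := by
    apply intervalIntegral.integral_congr
    intro u₂ _
    simp only
    rw [intervalIntegral.integral_congr (g := fun u₁ =>
      ∑ h₁ ∈ Finset.range (l₁+1), ∑ h₂ ∈ Finset.range (l₂+1),
        ∑ g₁ ∈ Finset.range l₁, ∑ g₂ ∈ Finset.range l₂,
        T h₁ h₂ g₁ g₂ * (bern l₁ h₁ u₁ * ((l₁:ℝ) * bern (l₁-1) g₁ u₁)) *
          (bern l₂ h₂ u₂ * ((l₂:ℝ) * bern (l₂-1) g₂ u₂))) (fun u₁ _ => hpt u₁ u₂)]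
    rw [integral_quad _ _ _ _ _ (fun a b c d =>
      (hcont (T a b c d) l₁ a (l₁-1) c (l₁:ℝ)
        (bern l₂ b u₂ * ((l₂:ℝ) * bern (l₂-1) d u₂))))]
    refine Finset.sum_congr rfl fun h₁ _ => Finset.sum_congr rfl fun h₂ _ =>
      Finset.sum_congr rfl fun g₁ _ => Finset.sum_congr rfl fun g₂ _ => ?_
    have hfe : (fun u₁ => T h₁ h₂ g₁ g₂ * (bern l₁ h₁ u₁ * ((l₁:ℝ) * bern (l₁-1) g₁ u₁)) *
          (bern l₂ h₂ u₂ * ((l₂:ℝ) * bern (l₂-1) g₂ u₂)))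
        = fun u₁ => (T h₁ h₂ g₁ g₂ * (bern l₂ h₂ u₂ * ((l₂:ℝ) * bern (l₂-1) g₂ u₂))) *
          (bern l₁ h₁ u₁ * ((l₁:ℝ) * bern (l₁-1) g₁ u₁)) := by
      funext u₁; ring
    rw [hfe, intervalIntegral.integral_const_mul]
    ring
  have step2 : (∫ u₂ in (0:ℝ)..1, ∑ h₁ ∈ Finset.range (l₁+1), ∑ h₂ ∈ Finset.range (l₂+1),
          ∑ g₁ ∈ Finset.range l₁, ∑ g₂ ∈ Finset.range l₂,
          (T h₁ h₂ g₁ g₂ * (∫ u in (0:ℝ)..1, bern l₁ h₁ u * ((l₁:ℝ) * bern (l₁-1) g₁ u))) *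
            (bern l₂ h₂ u₂ * ((l₂:ℝ) * bern (l₂-1) g₂ u₂)))
      = ∑ h₁ ∈ Finset.range (l₁+1), ∑ h₂ ∈ Finset.range (l₂+1),
          ∑ g₁ ∈ Finset.range l₁, ∑ g₂ ∈ Finset.range l₂,
          (T h₁ h₂ g₁ g₂ * (∫ u in (0:ℝ)..1, bern l₁ h₁ u * ((l₁:ℝ) * bern (l₁-1) g₁ u))) *
            (∫ u in (0:ℝ)..1, bern l₂ h₂ u * ((l₂:ℝ) * bern (l₂-1) g₂ u)) := by
    rw [integral_quad _ _ _ _ _ (fun a b c d =>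
      (continuous_const.fun_mul ((bern_cont l₂ b).fun_mul
        (continuous_const.fun_mul (bern_cont (l₂-1) d)))))]
    refine Finset.sum_congr rfl fun h₁ _ => Finset.sum_congr rfl fun h₂ _ =>
      Finset.sum_congr rfl fun g₁ _ => Finset.sum_congr rfl fun g₂ _ => ?_
    rw [intervalIntegral.integral_const_mul]
  rw [step1, step2]
  congr 1
  refine Finset.sum_congr rfl fun h₁ hh₁ => Finset.sum_congr rfl fun h₂ hh₂ =>
    Finset.sum_congr rfl fun g₁ hg₁ => Finset.sum_congr rfl fun g₂ hg₂ => ?_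
  rw [bern_integral l₁ h₁ g₁ hl₁ (by simpa using Nat.lt_succ_iff.mp (Finset.mem_range.mp hh₁))
      (Finset.mem_range.mp hg₁),
    bern_integral l₂ h₂ g₂ hl₂ (by simpa using Nat.lt_succ_iff.mp (Finset.mem_range.mp hh₂))
      (Finset.mem_range.mp hg₂), hT]
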